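/- Let G be an infinite nilpotent group with the property K̄∞. Then the commutator subgroup ⁅G,G⁆ of G is finite. -/

import Mathlib

/-- A group `G` has property K̄∞ if for every subgroup `X` of `G` the set of
subgroups of the form `⁅X, H⁆`, with `H` ranging over infinite subgroups of `G`,
is finite. -/
def PropKInf (G : Type*) [Group G] : Prop :=
  ∀ X : Subgroup G, {S : Subgroup G | ∃ H : Subgroup G, Infinite H ∧ S = ⁅X, H⁆}.Finite

open Subgroup
open scoped commutatorElement
universe u

/-- Property K: for every subgroup `X`, there are only finitely many commutator
subgroups `⁅X, H⁆` with `H` ranging over ALL subgroups. -/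
def PropK (G : Type*) [Group G] : Prop :=
  ∀ X : Subgroup G, {S : Subgroup G | ∃ H : Subgroup G, S = ⁅X, H⁆}.Finite

section Helpers
variable {G : Type u} [Group G]

lemma conj_center' {z : G} (hz : z ∈ Subgroup.center G) (a : G) : a * z * a⁻¹ = z := by
  rw [Subgroup.mem_center_iff.mp hz a, mul_assoc, mul_inv_cancel, mul_one]

lemma comm_mul_right' {a b c : G} (h : ⁅a, c⁆ ∈ Subgroup.center G) :
    ⁅a, b * c⁆ = ⁅a, b⁆ * ⁅a, c⁆ := by
  have : ⁅a, b * c⁆ = ⁅a, b⁆ * (b * ⁅a, c⁆ * b⁻¹) := by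
    simp only [commutatorElement_def]; group
  rw [this, conj_center' h]

lemma comm_inv_right' {a b : G} (h : ⁅a, b⁆ ∈ Subgroup.center G) :
    ⁅a, b⁻¹⁆ = ⁅a, b⁆⁻¹ := by
  have : ⁅a, b⁻¹⁆ = b⁻¹ * ⁅a, b⁆⁻¹ * b := by
    simp only [commutatorElement_def]; group
  rw [this]
  have := conj_center' (inv_mem h) b⁻¹
  simpa using this

lemma comm_mul_left' {a b c : G} (h : ⁅b, c⁆ ∈ Subgroup.center G) :
    ⁅a * b, c⁆ = ⁅a, c⁆ * ⁅b, c⁆ := by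
  have h1 : ⁅a * b, c⁆ = (a * ⁅b, c⁆ * a⁻¹) * ⁅a, c⁆ := by
    simp only [commutatorElement_def]; group
  rw [h1, conj_center' h, Subgroup.mem_center_iff.mp h]

lemma commutator_closure_le' (M : Subgroup G) (s : Set G) (T : Subgroup G)
    (hc : ∀ m ∈ M, ∀ g : G, ⁅m, g⁆ ∈ Subgroup.center G)
    (hgen : ∀ m ∈ M, ∀ h ∈ s, ⁅m, h⁆ ∈ T) :
    ⁅M, Subgroup.closure s⁆ ≤ T := by
  rw [Subgroup.commutator_le]
  intro m hm g hg
  induction hg using Subgroup.closure_induction with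
  | mem x hx => exact hgen m hm x hx
  | one => simpa using one_mem T
  | mul x y hx hy px py => rw [comm_mul_right' (hc m hm y)]; exact mul_mem px py
  | inv x hx px => rw [comm_inv_right' (hc m hm x)]; exact inv_mem px

lemma exists_finset_commutator_top' (X : Subgroup G)
    (hfin : {S : Subgroup G | ∃ H : Subgroup G, S = ⁅X, H⁆}.Finite) :
    ∃ s : Finset G, ⁅X, (⊤ : Subgroup G)⁆ = ⁅X, Subgroup.closure (s : Set G)⁆ := by
  classical
  set V : Set (Subgroup G) := {S | ∃ s : Finset G, S = ⁅X, Subgroup.closure (s : Set G)⁆} with hV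
  have hVfin : V.Finite := hfin.subset (by rintro S ⟨s, rfl⟩; exact ⟨_, rfl⟩)
  have hne : V.Nonempty := ⟨⁅X, Subgroup.closure ((∅ : Finset G) : Set G)⁆, ∅, rfl⟩
  obtain ⟨m, hmV, hmax⟩ : ∃ a ∈ V, ∀ a' ∈ V, id a ≤ id a' → id a = id a' := by
    obtain ⟨i, hi, h⟩ := Set.Finite.exists_maximalFor id V hVfin hne
    exact ⟨i, hi, fun a' ha' hle => le_antisymm hle (h ha' hle)⟩
  obtain ⟨s₀, rfl⟩ := hmV
  refine ⟨s₀, le_antisymm ?_ (Subgroup.commutator_mono le_rfl le_top)⟩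
  rw [Subgroup.commutator_le]
  intro x hx g _
  have h1 : ⁅X, Subgroup.closure ((insert g s₀ : Finset G) : Set G)⁆ ∈ V := ⟨_, rfl⟩
  have hle : ⁅X, Subgroup.closure (s₀ : Set G)⁆ ≤
      ⁅X, Subgroup.closure ((insert g s₀ : Finset G) : Set G)⁆ := by
    apply Subgroup.commutator_mono le_rfl
    apply Subgroup.closure_mono
    simp only [Finset.coe_insert]
    exact Set.subset_insert _ _
  have heq := hmax _ h1 hle
  have hg : g ∈ Subgroup.closure ((insert g s₀ : Finset G) : Set G) :=
    Subgroup.subset_closure (by simp)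
  have hmem := Subgroup.commutator_mem_commutator hx hg
  simp only [id] at heq
  rw [← heq] at hmem
  exact hmem

lemma finite_of_subgroups_finite' (R : Subgroup G)
    (h : {T : Subgroup G | T ≤ R}.Finite) : Finite R := by
  by_cases htor : ∀ x ∈ R, IsOfFinOrder x
  · have hsub : (R : Set G) ⊆
        ⋃ T ∈ {T : Subgroup G | T ≤ R ∧ (T : Set G).Finite}, (T : Set G) := by
      intro x hx
      exact Set.mem_biUnion ⟨Subgroup.zpowers_le.mpr hx, finite_zpowers.mpr (htor x hx)⟩
        (Subgroup.mem_zpowers x)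
    have hfin : (⋃ T ∈ {T : Subgroup G | T ≤ R ∧ (T : Set G).Finite}, (T : Set G)).Finite :=
      Set.Finite.biUnion (h.subset fun T hT => hT.1) fun T hT => hT.2
    exact (hfin.subset hsub).to_subtype
  · push_neg at htor
    obtain ⟨x, hxR, hx⟩ := htor
    exfalso
    have hinj : Function.Injective (fun n : ℕ => Subgroup.zpowers (x ^ 2 ^ n)) := by
      have hz : Function.Injective (fun k : ℤ => x ^ k) :=
        injective_zpow_iff_not_isOfFinOrder.mpr hx
      have key : ∀ n m : ℕ, Subgroup.zpowers (x ^ 2 ^ n) = Subgroup.zpowers (x ^ 2 ^ m) →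
          ((2 : ℤ) ^ m ≤ 2 ^ n) := by
        intro n m hnm
        have : x ^ 2 ^ n ∈ Subgroup.zpowers (x ^ 2 ^ m) := hnm ▸ Subgroup.mem_zpowers _
        obtain ⟨k, hk⟩ := this
        have hcast : ∀ j : ℕ, x ^ ((2 : ℤ) ^ j) = x ^ (2 ^ j : ℕ) := fun j => by
          rw [← zpow_natCast]; norm_cast
        have hk' : x ^ ((2 : ℤ) ^ m * k) = x ^ ((2 : ℤ) ^ n) := by
          rw [zpow_mul, hcast, hcast]; exact hk
        have : (2 : ℤ) ^ m * k = 2 ^ n := hz hk'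
        have hdvd : (2 : ℤ) ^ m ∣ 2 ^ n := Dvd.intro k this
        exact Int.le_of_dvd (by positivity) hdvd
      intro n m hnm
      have h1 := key n m hnm
      have h2 := key m n hnm.symm
      have : (2 : ℤ) ^ n = 2 ^ m := le_antisymm h2 h1
      exact Nat.pow_right_injective le_rfl (by exact_mod_cast this)
    have hmem : ∀ n : ℕ, Subgroup.zpowers (x ^ 2 ^ n) ∈ {T : Subgroup G | T ≤ R} :=
      fun n => Subgroup.zpowers_le.mpr (pow_mem hxR _)
    exact (Set.infinite_of_injective_forall_mem hinj hmem) h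

lemma normal_of_le_center' (H : Subgroup G) (h : H ≤ Subgroup.center G) : H.Normal := by
  constructor
  intro n hn g
  have : g * n * g⁻¹ = n := by
    rw [Subgroup.mem_center_iff.mp (h hn) g, mul_assoc, mul_inv_cancel, mul_one]
  rwa [this]

lemma finite_biSup' {ι : Type*} (s : Finset ι) (f : ι → Subgroup G)
    (hc : ∀ i ∈ s, f i ≤ Subgroup.center G) (hf : ∀ i ∈ s, ((f i : Set G)).Finite) :
    (((⨆ i ∈ s, f i : Subgroup G)) : Set G).Finite := by
  classical
  induction s using Finset.induction_on with
  | empty => simp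
  | @insert a s ha ih =>
    rw [Finset.iSup_insert]
    have hN : (⨆ i ∈ s, f i : Subgroup G).Normal := by
      apply normal_of_le_center'
      exact iSup₂_le fun i hi => hc i (Finset.mem_insert_of_mem hi)
    rw [Subgroup.mul_normal (f a) (⨆ i ∈ s, f i)]
    exact (hf a (Finset.mem_insert_self a s)).mul
      (ih (fun i hi => hc i (Finset.mem_insert_of_mem hi))
        (fun i hi => hf i (Finset.mem_insert_of_mem hi)))

lemma finite_comap' {Q : Type*} [Group Q] (f : G →* Q) (hker : Finite f.ker)
    (C : Subgroup Q) (hC : Finite C) : Finite (Subgroup.comap f C) := by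
  have h1 : (C : Set Q).Finite := Set.finite_coe_iff.mp hC
  have hker' : (f.ker : Set G).Finite := Set.finite_coe_iff.mp hker
  have hfib : ∀ q : Q, (f ⁻¹' {q}).Finite := by
    intro q
    rcases Set.eq_empty_or_nonempty (f ⁻¹' {q}) with he | ⟨x, hx⟩
    · rw [he]; exact Set.finite_empty
    · have : f ⁻¹' {q} ⊆ (fun y => x * y) '' (f.ker : Set G) := by
        intro y hy
        refine ⟨x⁻¹ * y, ?_, by group⟩
        have hfy : f y = q := hy
        have hfx : f x = q := hx
        simp [MonoidHom.mem_ker, hfy, hfx]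
      exact ((hker'.image _).subset this)
    
  have : (Subgroup.comap f C : Set G) ⊆ ⋃ q ∈ (C : Set Q), f ⁻¹' {q} := by
    intro x hx
    exact Set.mem_biUnion hx rfl
  exact ((h1.biUnion fun q _ => hfib q).subset this).to_subtype

lemma finite_of_le' {K K' : Subgroup G} (hle : K ≤ K') (h : Finite K') : Finite K :=
  Set.Finite.to_subtype ((Set.finite_coe_iff.mp h).subset hle)

lemma lcs_map' {Q : Type u} [Group Q] (f : G →* Q) (hf : Function.Surjective f) (n : ℕ) :
    Subgroup.map f (Subgroup.lowerCentralSeries (⊤ : Subgroup G) n) = Subgroup.lowerCentralSeries (⊤ : Subgroup Q) n := by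
  induction n with
  | zero => exact Subgroup.map_top_of_surjective f hf
  | succ n ih =>
    show Subgroup.map f ⁅Subgroup.lowerCentralSeries (⊤ : Subgroup G) n, ⊤⁆ = ⁅Subgroup.lowerCentralSeries (⊤ : Subgroup Q) n, ⊤⁆
    rw [Subgroup.map_commutator, ih, Subgroup.map_top_of_surjective f hf]


lemma PropK.quotient' {Q : Type*} [Group Q] (f : G →* Q) (hf : Function.Surjective f)
    (h : PropK G) : PropK Q := by
  intro X
  apply ((h (Subgroup.comap f X)).image (Subgroup.map f)).subset
  rintro S ⟨H, rfl⟩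
  refine ⟨⁅Subgroup.comap f X, Subgroup.comap f H⁆, ⟨Subgroup.comap f H, rfl⟩, ?_⟩
  rw [Subgroup.map_commutator, Subgroup.map_comap_eq_self_of_surjective hf,
    Subgroup.map_comap_eq_self_of_surjective hf]

lemma PropKInf.quotient' {Q : Type*} [Group Q] (f : G →* Q) (hf : Function.Surjective f)
    (h : PropKInf G) : PropKInf Q := by
  intro X
  apply ((h (Subgroup.comap f X)).image (Subgroup.map f)).subset
  rintro S ⟨H, hHinf, rfl⟩
  refine ⟨⁅Subgroup.comap f X, Subgroup.comap f H⁆, ⟨Subgroup.comap f H, ?_, rfl⟩, ?_⟩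
  · have hsurj : Function.Surjective
        (fun x : Subgroup.comap f H => (⟨f x, x.2⟩ : H)) := by
      rintro ⟨y, hy⟩
      obtain ⟨x, rfl⟩ := hf y
      exact ⟨⟨x, hy⟩, rfl⟩
    exact Infinite.of_surjective _ hsurj
  · rw [Subgroup.map_commutator, Subgroup.map_comap_eq_self_of_surjective hf,
      Subgroup.map_comap_eq_self_of_surjective hf]

lemma propK_of_infinite_center' (hG : PropKInf G) (hZ : Infinite (Subgroup.center G)) :
    PropK G := by
  intro X
  apply (hG X).subset
  rintro S ⟨H, rfl⟩
  refine ⟨H ⊔ Subgroup.center G, ?_, ?_⟩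
  · exact Infinite.of_injective (Subgroup.inclusion le_sup_right)
      (Subgroup.inclusion_injective _)
  · refine le_antisymm (Subgroup.commutator_mono le_rfl le_sup_left) ?_
    rw [Subgroup.commutator_le]
    intro x hx g hg
    rw [← SetLike.mem_coe, Subgroup.mul_normal H (Subgroup.center G)] at hg
    obtain ⟨h, hh, z, hz, rfl⟩ := hg
    have hcz : ⁅x, z⁆ = 1 := commutatorElement_eq_one_iff_commute.mpr
      (Subgroup.mem_center_iff.mp hz x)
    have : ⁅x, h * z⁆ = ⁅x, h⁆ * ⁅x, z⁆ := by
      have hc : ⁅x, z⁆ ∈ Subgroup.center G := by rw [hcz]; exact one_mem _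
      have key : ⁅x, h * z⁆ = ⁅x, h⁆ * (h * ⁅x, z⁆ * h⁻¹) := by
        simp only [commutatorElement_def]; group
      rw [key, Subgroup.mem_center_iff.mp hc h, mul_assoc, mul_inv_cancel, mul_one]
    rw [this, hcz, mul_one]
    exact Subgroup.commutator_mem_commutator hx hh

lemma range_comm_finite' (hK : PropK G) (M : Subgroup G)
    (hcM : ∀ p ∈ M, ∀ g : G, ⁅p, g⁆ ∈ Subgroup.center G) (h : G) :
    ∃ R : Subgroup G, (∀ p ∈ M, ⁅p, h⁆ ∈ R) ∧ R ≤ Subgroup.center G ∧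
      (R : Set G).Finite := by
  let φ : M →* G := MonoidHom.mk' (fun m => ⁅(m : G), h⁆) (by
    intro a b
    exact comm_mul_left' (hcM b b.2 h))
  have hrange : ∀ x, x ∈ φ.range ↔ ∃ m : M, ⁅(m : G), h⁆ = x := fun x => Iff.rfl
  refine ⟨φ.range, fun p hp => ⟨⟨p, hp⟩, rfl⟩, ?_, ?_⟩
  · rintro x ⟨m, rfl⟩
    exact hcM m m.2 h
  · have key : ∀ T : Subgroup G, T ≤ φ.range →
        ∃ U : Subgroup G, T = ⁅Subgroup.zpowers h, U⁆ := by
      intro T hT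
      refine ⟨Subgroup.map M.subtype (Subgroup.comap φ T), le_antisymm ?_ ?_⟩
      · intro t ht
        obtain ⟨m, hm⟩ := hT ht
        rw [Subgroup.commutator_comm]
        have hφm : φ m ∈ T := hm ▸ ht
        have hmU : (m : G) ∈ Subgroup.map M.subtype (Subgroup.comap φ T) :=
          ⟨m, hφm, rfl⟩
        have h2 := Subgroup.commutator_mem_commutator hmU (Subgroup.mem_zpowers h)
        have h3 : φ m = ⁅(m : G), h⁆ := rfl
        rw [← hm, h3]
        exact h2
      · rw [Subgroup.commutator_comm, Subgroup.zpowers_eq_closure]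
        apply commutator_closure_le'
        · rintro u ⟨y, hy, rfl⟩ g
          exact hcM _ y.2 g
        · rintro u ⟨y, hy, rfl⟩ x hx
          rw [Set.mem_singleton_iff] at hx; subst hx
          exact hy
    have hsub : {T : Subgroup G | T ≤ φ.range} ⊆
        {S : Subgroup G | ∃ H' : Subgroup G, S = ⁅Subgroup.zpowers h, H'⁆} :=
      fun T hT => key T hT
    have hfin : Finite φ.range :=
      finite_of_subgroups_finite' _ ((hK (Subgroup.zpowers h)).subset hsub)
    exact Set.finite_coe_iff.mp hfin

end Helpers

lemma finite_commutator_of_ker' {G : Type u} [Group G] {Q : Type u} [Group Q]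
    (f : G →* Q) (hker : Finite f.ker) (hQ : Finite (commutator Q)) :
    Finite (commutator G) := by
  have h1 : commutator G ≤ Subgroup.comap f (commutator Q) := by
    rw [← Subgroup.map_le_iff_le_comap]
    show Subgroup.map f ⁅(⊤ : Subgroup G), ⊤⁆ ≤ ⁅(⊤ : Subgroup Q), ⊤⁆
    rw [Subgroup.map_commutator]
    exact Subgroup.commutator_mono le_top le_top
  exact finite_of_le' h1 (finite_comap' f hker _ hQ)

lemma propK_finite_commutator : ∀ (n : ℕ) (G : Type u) [Group G],
    PropK G → Subgroup.lowerCentralSeries (⊤ : Subgroup G) n = ⊥ → Finite (commutator G) := by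
  intro n
  induction n with
  | zero =>
    intro G _ _ hbot
    have h1 : commutator G = ⊥ := le_bot_iff.mp (hbot ▸ le_top)
    rw [h1]; infer_instance
  | succ n ih =>
    intro G _ hK hbot
    cases n with
    | zero =>
      have h1 : commutator G = ⊥ := by rw [← Subgroup.top_lowerCentralSeries_one]; exact hbot
      rw [h1]; infer_instance
    | succ m =>
      set M := Subgroup.lowerCentralSeries (⊤ : Subgroup G) m with hM
      have hLM : Subgroup.lowerCentralSeries (⊤ : Subgroup G) (m + 1) = ⁅M, ⊤⁆ := rfl
      have hbot' : ⁅Subgroup.lowerCentralSeries (⊤ : Subgroup G) (m + 1), (⊤ : Subgroup G)⁆ = ⊥ := hbot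
      have hLc : ∀ x ∈ Subgroup.lowerCentralSeries (⊤ : Subgroup G) (m + 1), x ∈ Subgroup.center G := by
        intro x hx
        rw [Subgroup.mem_center_iff]
        intro g
        have h2 : ⁅x, g⁆ ∈ (⊥ : Subgroup G) := by
          rw [← hbot']
          exact Subgroup.commutator_mem_commutator hx (Subgroup.mem_top g)
        have h3 : Commute x g := commutatorElement_eq_one_iff_commute.mp
          (Subgroup.mem_bot.mp h2)
        exact h3.symm.eq
      have hcM : ∀ p ∈ M, ∀ g : G, ⁅p, g⁆ ∈ Subgroup.center G := fun p hp g =>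
        hLc _ (Subgroup.commutator_mem_commutator hp (Subgroup.mem_top g))
      obtain ⟨s, hs⟩ := exists_finset_commutator_top' M (hK M)
      choose R hR1 hR2 hR3 using range_comm_finite' hK M hcM
      have hNfin : (((⨆ h ∈ s, R h : Subgroup G)) : Set G).Finite :=
        finite_biSup' s R (fun i _ => hR2 i) (fun i _ => hR3 i)
      have hLN : Subgroup.lowerCentralSeries (⊤ : Subgroup G) (m + 1) ≤ ⨆ h ∈ s, R h := by
        rw [hLM, hs]
        apply commutator_closure_le' M _ _ hcM
        intro p hp h hh
        have : R h ≤ ⨆ h ∈ s, R h := le_iSup₂ (f := fun h _ => R h) h hh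
        exact this (hR1 h p hp)
      have hLfin : Finite (Subgroup.lowerCentralSeries (⊤ : Subgroup G) (m + 1)) :=
        Set.Finite.to_subtype (hNfin.subset hLN)
      -- quotient
      let L := Subgroup.lowerCentralSeries (⊤ : Subgroup G) (m + 1)
      let π := QuotientGroup.mk' L
      have hsurj : Function.Surjective π := QuotientGroup.mk'_surjective L
      have hQbot : Subgroup.lowerCentralSeries (⊤ : Subgroup (G ⧸ L)) (m + 1) = ⊥ := by
        rw [← lcs_map' π hsurj, Subgroup.map_eq_bot_iff, QuotientGroup.ker_mk']
      have hQK : PropK (G ⧸ L) := PropK.quotient' π hsurj hK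
      have hQfin : Finite (commutator (G ⧸ L)) := ih (G ⧸ L) hQK hQbot
      have hkerfin : Finite π.ker := by
        rw [QuotientGroup.ker_mk']
        exact hLfin
      exact finite_commutator_of_ker' π hkerfin hQfin

lemma main_aux : ∀ (n : ℕ) (G : Type u) [Group G], Infinite G → PropKInf G →
    Subgroup.lowerCentralSeries (⊤ : Subgroup G) n = ⊥ → Finite (commutator G) := by
  intro n
  induction n with
  | zero =>
    intro G _ _ _ hbot
    have h1 : commutator G = ⊥ := le_bot_iff.mp (hbot ▸ le_top)
    rw [h1]; infer_instance
  | succ n ih =>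
    intro G _ hinf hG hbot
    set L := Subgroup.lowerCentralSeries (⊤ : Subgroup G) n with hL
    have hbot' : ⁅L, (⊤ : Subgroup G)⁆ = ⊥ := hbot
    have hLc : L ≤ Subgroup.center G := by
      intro x hx
      rw [Subgroup.mem_center_iff]
      intro g
      have h2 : ⁅x, g⁆ ∈ (⊥ : Subgroup G) := by
        rw [← hbot']
        exact Subgroup.commutator_mem_commutator hx (Subgroup.mem_top g)
      have h3 : Commute x g := commutatorElement_eq_one_iff_commute.mp
        (Subgroup.mem_bot.mp h2)
      exact h3.symm.eq
    by_cases hLfin : Finite L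
    · let π := QuotientGroup.mk' L
      have hsurj : Function.Surjective π := QuotientGroup.mk'_surjective L
      have hkerfin : Finite π.ker := by rw [QuotientGroup.ker_mk']; exact hLfin
      have hQinf : Infinite (G ⧸ L) := by
        by_contra hfin
        rw [not_infinite_iff_finite] at hfin
        have h4 : Finite (Subgroup.comap π (⊤ : Subgroup (G ⧸ L))) :=
          finite_comap' π hkerfin ⊤ (Set.toFinite _).to_subtype
        rw [Subgroup.comap_top] at h4
        have h5 : Finite G := Finite.of_equiv _ Subgroup.topEquiv.toEquiv
        exact (not_infinite_iff_finite.mpr h5) hinf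
      have hQbot : Subgroup.lowerCentralSeries (⊤ : Subgroup (G ⧸ L)) n = ⊥ := by
        rw [← lcs_map' π hsurj]
        rw [Subgroup.map_eq_bot_iff, QuotientGroup.ker_mk']
      exact finite_commutator_of_ker' π hkerfin
        (ih (G ⧸ L) hQinf (PropKInf.quotient' π hsurj hG) hQbot)
    · rw [not_finite_iff_infinite] at hLfin
      have hZ : Infinite (Subgroup.center G) :=
        Infinite.of_injective (Subgroup.inclusion hLc) (Subgroup.inclusion_injective _)
      exact propK_finite_commutator (n + 1) G (propK_of_infinite_center' hG hZ) hbot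

theorem stmt_14 (G : Type*) [Group G] (hinf : Infinite G)
    (hnilp : Group.IsNilpotent G) (hG : PropKInf G) :
    Finite (commutator G) := by
  obtain ⟨n, hn⟩ := _root_.nilpotent_iff_lowerCentralSeries.mp hnilp
  exact main_aux n G hinf hG hn
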